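/- Let p ∈ (0,1) and let X = (X_i)_{i∈ℤ} be i.i.d. Bernoulli(p). For fixed n, define a marker to be an interval [j, j+2n+1] with X_i = 0 for all i ∈ [j, j+2n] and X_{j+2n+1} = 1, and a filler to be a maximal nonempty interval between two consecutive markers. Then conditioned on the set of marker locations, the restrictions of X to the distinct filler intervals are mutually independent, and the conditional law of X on each filler interval of length ℓ is that of ℓ i.i.d. Bernoulli(p) variables conditioned to contain no marker; in particular, on a filler of length exactly n the conditional law is exactly that of n i.i.d. Bernoulli(p) variables. -/

import Mathlib

open MeasureTheory ProbabilityTheory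
open scoped Classical

/-- Bernoulli(p) mass function on `Fin 2`. -/
def bernFn (p : ℝ) (a : Fin 2) : ℝ := if a = 1 then p else 1 - p

/-- `x` has a marker (2n+1 zeros followed by a one) starting at position `j`. -/
def markerAt (n : ℕ) (x : ℤ → Fin 2) (j : ℤ) : Prop :=
  (∀ i ∈ Finset.Icc j (j + 2 * n), x i = 0) ∧ x (j + 2 * n + 1) = 1

/-- `j < j'` are consecutive elements of the set `S` of marker locations. -/
def consecIn (S : Finset ℤ) (j j' : ℤ) : Prop :=
  j ∈ S ∧ j' ∈ S ∧ j < j' ∧ ∀ k ∈ S, ¬(j < k ∧ k < j')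

/-- The filler interval strictly between the markers starting at `j` and at `j'`. -/
noncomputable def fillerOf (n : ℕ) (t : ℤ × ℤ) : Finset ℤ :=
  Finset.Icc (t.1 + 2 * n + 2) (t.2 - 1)

/-- The string `v` contains no marker fully inside the finite interval `F`. -/
def noMarkerIn (n : ℕ) (v : ℤ → Fin 2) (F : Finset ℤ) : Prop :=
  ¬∃ i : ℤ, Finset.Icc i (i + 2 * n + 1) ⊆ F ∧
    (∀ k ∈ Finset.Icc i (i + 2 * n), v k = 0) ∧ v (i + 2 * n + 1) = 1

/-- The Bernoulli(p) weight of the values `v` on the filler of `t`, which is zero if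
`v` contains a marker there (an impossible configuration for a filler). -/
noncomputable def fillerWeight (p : ℝ) (n : ℕ) (v : ℤ → Fin 2) (t : ℤ × ℤ) : ℝ :=
  if noMarkerIn n v (fillerOf n t) then ∏ i : fillerOf n t, bernFn p (v i) else 0

/-- The normalizing constant: total Bernoulli(p) weight of the length-|filler| strings
containing no marker. -/
noncomputable def fillerZ (p : ℝ) (n : ℕ) (t : ℤ × ℤ) : ℝ :=
  ∑ u : fillerOf n t → Fin 2,
    if noMarkerIn n (fun i => if h : i ∈ fillerOf n t then u ⟨i, h⟩ else 1)
        (fillerOf n t)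
      then ∏ i : fillerOf n t, bernFn p (u i) else 0

/-! ### Auxiliary material -/

set_option linter.unusedSectionVars false

/-- Extension of a pattern on `F` by the default value `1`. -/
def extFn (F : Finset ℤ) (u : F → Fin 2) : ℤ → Fin 2 :=
  fun i => if h : i ∈ F then u ⟨i, h⟩ else 1

lemma bern_nonneg {p : ℝ} (hp : p ∈ Set.Ioo (0:ℝ) 1) (a : Fin 2) : 0 ≤ bernFn p a := by
  obtain ⟨h1, h2⟩ := hp
  unfold bernFn; split <;> linarith

lemma prod_extFn {M : Type*} [CommMonoid M] (F : Finset ℤ) (u : F → Fin 2) (f : Fin 2 → M) :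
    ∏ i ∈ F, f (extFn F u i) = ∏ i : F, f (u i) := by
  rw [Finset.univ_eq_attach, ← Finset.prod_attach F (fun i => f (extFn F u i))]
  exact Finset.prod_congr rfl fun x _ => by simp [extFn, x.2]

lemma prod_coe_fn {M : Type*} [CommMonoid M] (F : Finset ℤ) (v : ℤ → Fin 2) (f : Fin 2 → M) :
    (∏ i : F, f (v i)) = ∏ i ∈ F, f (v i) := by
  rw [Finset.univ_eq_attach]
  exact Finset.prod_attach F (fun i => f (v i))

lemma fillerZ_eq (p : ℝ) (n : ℕ) (t : ℤ × ℤ) :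
    fillerZ p n t = ∑ u : fillerOf n t → Fin 2,
      if noMarkerIn n (extFn (fillerOf n t) u) (fillerOf n t)
        then ∏ i ∈ fillerOf n t, bernFn p (extFn (fillerOf n t) u i) else 0 := by
  unfold fillerZ
  refine Finset.sum_congr rfl fun u _ => ?_
  rw [prod_extFn]
  rfl

lemma fillerZ_nonneg {p : ℝ} (hp : p ∈ Set.Ioo (0:ℝ) 1) (n : ℕ) (t : ℤ × ℤ) :
    0 ≤ fillerZ p n t := by
  unfold fillerZ
  refine Finset.sum_nonneg fun u _ => ?_
  split
  · exact Finset.prod_nonneg fun i _ => bern_nonneg hp _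
  · exact le_refl 0

lemma fillerWeight_nonneg {p : ℝ} (hp : p ∈ Set.Ioo (0:ℝ) 1) (n : ℕ) (v : ℤ → Fin 2)
    (t : ℤ × ℤ) : 0 ≤ fillerWeight p n v t := by
  unfold fillerWeight
  split
  · exact Finset.prod_nonneg fun i _ => bern_nonneg hp _
  · exact le_refl 0

/-! ### Combinatorial lemmas about markers and fillers -/

lemma markerAt_congr {n : ℕ} {j : ℤ} {x x' : ℤ → Fin 2}
    (h : ∀ i ∈ Finset.Icc j (j + 2 * (n:ℤ) + 1), x i = x' i) :
    markerAt n x j ↔ markerAt n x' j := by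
  have hsub : ∀ i ∈ Finset.Icc j (j + 2 * (n:ℤ)), i ∈ Finset.Icc j (j + 2 * (n:ℤ) + 1) := by
    intro i hi; simp only [Finset.mem_Icc] at *; omega
  have hend : j + 2 * (n:ℤ) + 1 ∈ Finset.Icc j (j + 2 * (n:ℤ) + 1) := by
    simp only [Finset.mem_Icc]; omega
  unfold markerAt
  constructor
  · rintro ⟨hz, ho⟩
    exact ⟨fun i hi => (h i (hsub i hi)).symm.trans (hz i hi), (h _ hend).symm.trans ho⟩
  · rintro ⟨hz, ho⟩
    exact ⟨fun i hi => (h i (hsub i hi)).trans (hz i hi), (h _ hend).trans ho⟩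

lemma mem_filler_window {n m : ℕ} {S : Finset ℤ} (hS : ↑S ⊆ Set.Icc (-(m:ℤ)) m)
    {t : ℤ × ℤ} (ht : consecIn S t.1 t.2) :
    ∀ i ∈ fillerOf n t, -(m:ℤ) ≤ i ∧ i ≤ m := by
  intro i hi
  have h1 := hS (Finset.mem_coe.mpr ht.1)
  have h2 := hS (Finset.mem_coe.mpr ht.2.1)
  simp only [Set.mem_Icc] at h1 h2
  simp only [fillerOf, Finset.mem_Icc] at hi
  omega

lemma noMarkerIn_of_E {n m : ℕ} {S : Finset ℤ} (hS : ↑S ⊆ Set.Icc (-(m:ℤ)) m)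
    {t : ℤ × ℤ} (ht : consecIn S t.1 t.2) {x : ℤ → Fin 2}
    (hx : ∀ j ∈ Finset.Icc (-(m:ℤ)) (m:ℤ), (markerAt n x j ↔ j ∈ S)) :
    noMarkerIn n x (fillerOf n t) := by
  rintro ⟨i, hsub, hz, ho⟩
  have hi : i ∈ fillerOf n t := hsub (by simp only [Finset.mem_Icc]; omega)
  have hiw := mem_filler_window hS ht i hi
  simp only [fillerOf, Finset.mem_Icc] at hi
  have hiS : i ∈ S := (hx i (by simp only [Finset.mem_Icc]; omega)).mp ⟨hz, ho⟩
  exact ht.2.2.2 i hiS ⟨by omega, by omega⟩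

lemma noMarkerIn_ones {n : ℕ} {x : ℤ → Fin 2} {F : Finset ℤ}
    (h1 : ∀ i ∈ F, x i = 1) : noMarkerIn n x F := by
  rintro ⟨i, hsub, hz, -⟩
  have hi : i ∈ F := hsub (by simp only [Finset.mem_Icc]; omega)
  have h0 := hz i (by simp only [Finset.mem_Icc]; omega)
  rw [h1 i hi] at h0
  exact absurd h0 (by decide)

lemma noMarkerIn_congr {n : ℕ} {F : Finset ℤ} {x x' : ℤ → Fin 2}
    (h : ∀ i ∈ F, x i = x' i) (hx : noMarkerIn n x F) : noMarkerIn n x' F := by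
  rintro ⟨i, hsub, hz, ho⟩
  refine hx ⟨i, hsub, fun k hk => ?_, ?_⟩
  · have hkF : k ∈ F := hsub (by simp only [Finset.mem_Icc] at hk ⊢; omega)
    rw [h k hkF]; exact hz k hk
  · have hkF : i + 2 * (n:ℤ) + 1 ∈ F := hsub (by simp only [Finset.mem_Icc]; omega)
    rw [h _ hkF]; exact ho

lemma consec_le {S : Finset ℤ} {a b a' b' : ℤ} (h : consecIn S a b) (h' : consecIn S a' b')
    (hlt : a < a') : b ≤ a' := by
  by_contra hc
  push_neg at hc
  exact h.2.2.2 a' h'.1 ⟨hlt, hc⟩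

lemma consec_eq {S : Finset ℤ} {a b b' : ℤ} (h : consecIn S a b) (h' : consecIn S a b') :
    b = b' := by
  rcases lt_trichotomy b b' with hl | he | hl
  · exact absurd ⟨h.2.2.1, hl⟩ (h'.2.2.2 b h.2.1)
  · exact he
  · exact absurd ⟨h'.2.2.1, hl⟩ (h.2.2.2 b' h'.2.1)

lemma filler_disjoint {n : ℕ} {S : Finset ℤ} {t t' : ℤ × ℤ}
    (ht : consecIn S t.1 t.2) (ht' : consecIn S t'.1 t'.2) (hne : t ≠ t') :
    Disjoint (fillerOf n t) (fillerOf n t') := by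
  rw [Finset.disjoint_left]
  intro i hi hi'
  simp only [fillerOf, Finset.mem_Icc] at hi hi'
  rcases lt_trichotomy t.1 t'.1 with hl | he | hl
  · have := consec_le ht ht' hl; omega
  · have ht'' : consecIn S t.1 t'.2 := by rw [he]; exact ht'
    have h2 : t.2 = t'.2 := consec_eq ht ht''
    exact hne (Prod.ext he h2)
  · have := consec_le ht' ht hl; omega

/-- The key marker–filler lemma: changing the values inside one filler, in a way that
creates no marker inside the filler, does not change the set of marker locations. -/
lemma key_marker {n m : ℕ} {S : Finset ℤ} (hS : ↑S ⊆ Set.Icc (-(m:ℤ)) m)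
    {t : ℤ × ℤ} (ht : consecIn S t.1 t.2)
    {x x' : ℤ → Fin 2} (hag : ∀ i, i ∉ fillerOf n t → x i = x' i)
    (hx : ∀ j ∈ Finset.Icc (-(m:ℤ)) (m:ℤ), (markerAt n x j ↔ j ∈ S))
    (hx' : noMarkerIn n x' (fillerOf n t)) :
    ∀ j ∈ Finset.Icc (-(m:ℤ)) (m:ℤ), (markerAt n x' j ↔ j ∈ S) := by
  obtain ⟨ha, hb, hlt, hcons⟩ := ht
  have haI := hS (Finset.mem_coe.mpr ha)
  have hbI := hS (Finset.mem_coe.mpr hb)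
  simp only [Set.mem_Icc] at haI hbI
  have hnotF : ∀ i : ℤ, (i < t.1 + 2*(n:ℤ) + 2 ∨ t.2 - 1 < i) → i ∉ fillerOf n t := by
    intro i h hi
    simp only [fillerOf, Finset.mem_Icc] at hi
    omega
  have hma : markerAt n x t.1 := (hx t.1 (by simp only [Finset.mem_Icc]; omega)).mpr ha
  have hmb : markerAt n x t.2 := (hx t.2 (by simp only [Finset.mem_Icc]; omega)).mpr hb
  obtain ⟨hma0, hma1⟩ := hma
  obtain ⟨hmb0, hmb1⟩ := hmb
  have ha1 : x' (t.1 + 2*(n:ℤ) + 1) = 1 := by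
    rw [← hag _ (hnotF _ (by omega))]; exact hma1
  have hb0 : ∀ i ∈ Finset.Icc t.2 (t.2 + 2*(n:ℤ)), x' i = 0 := by
    intro i hi
    simp only [Finset.mem_Icc] at hi
    rw [← hag _ (hnotF _ (by omega))]
    exact hmb0 i (by simp only [Finset.mem_Icc]; omega)
  intro j hjw
  have hjw' := hjw
  simp only [Finset.mem_Icc] at hjw'
  by_cases hcase : j + 2*(n:ℤ) + 1 < t.1 + 2*(n:ℤ) + 2 ∨ t.2 ≤ j
  · -- the marker window at j misses the filler entirely
    have hagj : ∀ i ∈ Finset.Icc j (j + 2 * (n:ℤ) + 1), x i = x' i := by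
      intro i hi
      simp only [Finset.mem_Icc] at hi
      exact hag i (hnotF i (by omega))
    rw [← markerAt_congr hagj]
    exact hx j hjw
  · push_neg at hcase
    obtain ⟨hc1, hc2⟩ := hcase
    have hja : t.1 + 1 ≤ j := by omega
    have hjS : j ∉ S := fun hj => hcons j hj ⟨by omega, by omega⟩
    simp only [hjS, iff_false]
    rintro ⟨hz, ho⟩
    by_cases h1 : j ≤ t.1 + 2*(n:ℤ) + 1
    · -- the zero block of j's marker covers the 1 at the end of the marker of t.1
      have h := hz (t.1 + 2*(n:ℤ) + 1) (by simp only [Finset.mem_Icc]; omega)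
      rw [ha1] at h
      exact absurd h (by decide)
    · push_neg at h1
      by_cases h2 : j + 2*(n:ℤ) + 1 ≤ t.2 - 1
      · -- the marker at j lies entirely inside the filler
        refine hx' ⟨j, ?_, hz, ho⟩
        intro i hi
        simp only [Finset.mem_Icc] at hi
        simp only [fillerOf, Finset.mem_Icc]
        omega
      · -- the final 1 of j's marker lies in the zero block of the marker of t.2
        push_neg at h2
        have h := hb0 (j + 2*(n:ℤ) + 1) (by simp only [Finset.mem_Icc]; omega)
        rw [ho] at h
        exact absurd h (by decide)

/-! ### Measure-theoretic lemmas -/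

section Meas

variable {Ω : Type*} [MeasurableSpace Ω] (μ : Measure Ω) [IsProbabilityMeasure μ]
  {p : ℝ} (hp : p ∈ Set.Ioo (0:ℝ) 1) (X : ℤ → Ω → Fin 2) (hXm : ∀ i, Measurable (X i))
  (hXi : iIndepFun X μ)
  (hXd : ∀ (i : ℤ) (a : Fin 2), (μ {ω | X i ω = a}).toReal = bernFn p a)

include hXm in
lemma measurable_cyl (J : Finset ℤ) (y : ℤ → Fin 2) :
    MeasurableSet {ω | ∀ i ∈ J, X i ω = y i} := by
  have h : {ω | ∀ i ∈ J, X i ω = y i} = ⋂ i ∈ J, X i ⁻¹' {y i} := by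
    ext ω; simp [Set.mem_iInter]
  rw [h]
  exact Finset.measurableSet_biInter J fun i _ => (hXm i) (measurableSet_singleton _)

include hp hXi hXd in
lemma cyl_meas (J : Finset ℤ) (y : ℤ → Fin 2) :
    μ {ω | ∀ i ∈ J, X i ω = y i} = ENNReal.ofReal (∏ i ∈ J, bernFn p (y i)) := by
  have h1 : {ω | ∀ i ∈ J, X i ω = y i} = ⋂ i ∈ J, X i ⁻¹' {y i} := by
    ext ω; simp [Set.mem_iInter]
  rw [h1, hXi.measure_inter_preimage_eq_mul J (sets := fun i => {y i})
    (fun i _ => measurableSet_singleton _)]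
  rw [ENNReal.ofReal_prod_of_nonneg (fun i _ => bern_nonneg hp (y i))]
  refine Finset.prod_congr rfl fun i _ => ?_
  have h2 : X i ⁻¹' {y i} = {ω | X i ω = y i} := by ext ω; simp
  rw [h2, ← hXd i (y i), ENNReal.ofReal_toReal (measure_ne_top μ _)]

lemma cyl_pairwise (J : Finset ℤ) :
    (Set.univ : Set (J → Fin 2)).PairwiseDisjoint
      (fun g => {ω | ∀ i ∈ J, X i ω = extFn J g i}) := by
  intro g _ g' _ hne
  rw [Function.onFun, Set.disjoint_left]
  intro ω hg hg'
  apply hne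
  funext i
  have h := (hg i i.2).symm.trans (hg' i i.2)
  simpa [extFn, i.2] using h

lemma setQ_eq (J : Finset ℤ) (Q : (ℤ → Fin 2) → Prop)
    (hQ : ∀ x x', (∀ i ∈ J, x i = x' i) → Q x → Q x') (s : Set Ω) :
    {ω | Q (fun i => X i ω)} ∩ s =
      ⋃ g ∈ (Finset.univ : Finset (J → Fin 2)),
        (if Q (extFn J g) then {ω | ∀ i ∈ J, X i ω = extFn J g i} ∩ s else ∅) := by
  ext ω
  simp only [Set.mem_iUnion, Finset.mem_univ, Set.mem_inter_iff, Set.mem_setOf_eq,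
    exists_prop, true_and]
  constructor
  · rintro ⟨hω, hωs⟩
    refine ⟨fun i => X i ω, ?_⟩
    have hag : ∀ i ∈ J, X i ω = extFn J (fun i : J => X i ω) i := by
      intro i hi; simp [extFn, hi]
    rw [if_pos (hQ _ _ hag hω)]
    exact ⟨hag, hωs⟩
  · rintro ⟨g, hg⟩
    by_cases h : Q (extFn J g)
    · rw [if_pos h] at hg
      exact ⟨hQ _ _ (fun i hi => (hg.1 i hi).symm) h, hg.2⟩
    · rw [if_neg h] at hg; exact hg.elim

include hXm in
lemma measurable_setQ (J : Finset ℤ) (Q : (ℤ → Fin 2) → Prop)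
    (hQ : ∀ x x', (∀ i ∈ J, x i = x' i) → Q x → Q x') :
    MeasurableSet {ω | Q (fun i => X i ω)} := by
  have h := setQ_eq X J Q hQ Set.univ
  rw [Set.inter_univ] at h
  rw [h]
  refine Finset.measurableSet_biUnion _ fun g _ => ?_
  split
  · exact (measurable_cyl X hXm J _).inter MeasurableSet.univ
  · exact MeasurableSet.empty

include hXm in
lemma meas_Q_decomp (J : Finset ℤ) (Q : (ℤ → Fin 2) → Prop)
    (hQ : ∀ x x', (∀ i ∈ J, x i = x' i) → Q x → Q x') (s : Set Ω) (hms : MeasurableSet s) :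
    μ ({ω | Q (fun i => X i ω)} ∩ s) =
      ∑ g : J → Fin 2, if Q (extFn J g)
        then μ ({ω | ∀ i ∈ J, X i ω = extFn J g i} ∩ s) else 0 := by
  rw [setQ_eq X J Q hQ s, measure_biUnion_finset]
  · exact Finset.sum_congr rfl fun g _ => by split <;> simp
  · rw [Finset.coe_univ]
    refine (cyl_pairwise X J).mono fun g => ?_
    split
    · exact Set.inter_subset_left
    · exact Set.empty_subset _
  · intro g _
    split
    · exact (measurable_cyl X hXm J _).inter hms
    · exact MeasurableSet.empty

include hp hXm hXi hXd in
lemma meas_Q_cyl (J F : Finset ℤ) (hd : Disjoint J F) (Q : (ℤ → Fin 2) → Prop)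
    (hQ : ∀ x x', (∀ i ∈ J, x i = x' i) → Q x → Q x') (y : ℤ → Fin 2) :
    μ ({ω | Q (fun i => X i ω)} ∩ {ω | ∀ i ∈ F, X i ω = y i})
      = μ {ω | Q (fun i => X i ω)} * ENNReal.ofReal (∏ i ∈ F, bernFn p (y i)) := by
  have hcomb : ∀ g : J → Fin 2,
      μ ({ω | ∀ i ∈ J, X i ω = extFn J g i} ∩ {ω | ∀ i ∈ F, X i ω = y i})
        = μ {ω | ∀ i ∈ J, X i ω = extFn J g i}
            * ENNReal.ofReal (∏ i ∈ F, bernFn p (y i)) := by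
    intro g
    have hset : {ω | ∀ i ∈ J, X i ω = extFn J g i} ∩ {ω | ∀ i ∈ F, X i ω = y i}
        = {ω | ∀ i ∈ J ∪ F, X i ω = (fun i => if i ∈ J then extFn J g i else y i) i} := by
      ext ω
      simp only [Set.mem_inter_iff, Set.mem_setOf_eq, Finset.mem_union]
      constructor
      · rintro ⟨h1, h2⟩ i hi
        rcases hi with hi | hi
        · simp only [hi, if_true]; exact h1 i hi
        · have hiJ : i ∉ J := fun h' => (Finset.disjoint_left.mp hd h') hi
          simp only [hiJ, if_false]; exact h2 i hi
      · intro h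
        constructor
        · intro i hi
          have h' := h i (Or.inl hi)
          simpa only [hi, if_true] using h'
        · intro i hi
          have hiJ : i ∉ J := fun h' => (Finset.disjoint_left.mp hd h') hi
          have h' := h i (Or.inr hi)
          simpa only [hiJ, if_false] using h'
    rw [hset, cyl_meas μ hp X hXi hXd, cyl_meas μ hp X hXi hXd, Finset.prod_union hd,
      ENNReal.ofReal_mul (Finset.prod_nonneg fun i _ => bern_nonneg hp _)]
    congr 2
    · exact Finset.prod_congr rfl fun i hi => by simp only [hi, if_true]
    · refine Finset.prod_congr rfl fun i hi => ?_
      have hiJ : i ∉ J := fun h' => (Finset.disjoint_left.mp hd h') hi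
      simp only [hiJ, if_false]
  have huniv := meas_Q_decomp μ X hXm J Q hQ Set.univ MeasurableSet.univ
  simp only [Set.inter_univ] at huniv
  rw [meas_Q_decomp μ X hXm J Q hQ _ (measurable_cyl X hXm F y), huniv, Finset.sum_mul]
  refine Finset.sum_congr rfl fun g _ => ?_
  rw [ite_mul, zero_mul]
  split
  · exact hcomb g
  · rfl

include hp hXm hXi hXd in
lemma meas_AR (J F : Finset ℤ) (hd : Disjoint J F) (A R : (ℤ → Fin 2) → Prop)
    (hA : ∀ x x', (∀ i ∈ J, x i = x' i) → A x → A x')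
    (hR : ∀ x x', (∀ i ∈ F, x i = x' i) → R x → R x') :
    μ {ω | A (fun i => X i ω) ∧ R (fun i => X i ω)}
      = μ {ω | A (fun i => X i ω)} *
        ENNReal.ofReal (∑ u : F → Fin 2,
          if R (extFn F u) then ∏ i ∈ F, bernFn p (extFn F u i) else 0) := by
  have hset : {ω | A (fun i => X i ω) ∧ R (fun i => X i ω)} =
      ⋃ u ∈ (Finset.univ : Finset (F → Fin 2)),
        (if R (extFn F u)
          then {ω | A (fun i => X i ω)} ∩ {ω | ∀ i ∈ F, X i ω = extFn F u i} else ∅) := by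
    ext ω
    simp only [Set.mem_iUnion, Finset.mem_univ, Set.mem_inter_iff, Set.mem_setOf_eq,
      exists_prop, true_and]
    constructor
    · rintro ⟨hA1, hR1⟩
      refine ⟨fun i => X i ω, ?_⟩
      have hag : ∀ i ∈ F, X i ω = extFn F (fun i : F => X i ω) i := by
        intro i hi; simp [extFn, hi]
      rw [if_pos (hR _ _ hag hR1)]
      exact ⟨hA1, hag⟩
    · rintro ⟨u, hu⟩
      by_cases h : R (extFn F u)
      · rw [if_pos h] at hu
        exact ⟨hu.1, hR _ _ (fun i hi => (hu.2 i hi).symm) h⟩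
      · rw [if_neg h] at hu; exact hu.elim
  rw [hset, measure_biUnion_finset]
  · rw [ENNReal.ofReal_sum_of_nonneg (fun u _ => by
      split
      · exact Finset.prod_nonneg fun i _ => bern_nonneg hp _
      · exact le_refl 0),
      Finset.mul_sum]
    refine Finset.sum_congr rfl fun u _ => ?_
    by_cases h : R (extFn F u)
    · rw [if_pos h, if_pos h]
      exact meas_Q_cyl μ hp X hXm hXi hXd J F hd A hA (extFn F u)
    · rw [if_neg h, if_neg h, measure_empty, ENNReal.ofReal_zero, mul_zero]
  · rw [Finset.coe_univ]
    refine (cyl_pairwise X F).mono fun u => ?_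
    split
    · exact Set.inter_subset_right
    · exact Set.empty_subset _
  · intro u _
    split
    · exact (measurable_setQ X hXm J A hA).inter (measurable_cyl X hXm F _)
    · exact MeasurableSet.empty

end Meas

/-- marker–filler independence, Keane–Smorodinsky: for i.i.d.
Bernoulli(p) variables `X` indexed by ℤ, conditioned on the marker locations in a
window being exactly `S`, the restrictions of `X` to the distinct fillers are
mutually independent, and on each filler the conditional law is i.i.d. Bernoulli(p)
conditioned to contain no marker; this is expressed by the product formula
`μ(E ∩ {X = v on the fillers}) · ∏ Z_t = μ(E) · ∏ w_t(v)`. In particular, a fitted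
filler (length exactly n) cannot contain a marker, so there `Z_t = 1` and the
conditional law is exactly i.i.d. Bernoulli(p). -/
theorem stmt12 {Ω : Type*} [MeasurableSpace Ω] (μ : Measure Ω) [IsProbabilityMeasure μ]
    (p : ℝ) (hp : p ∈ Set.Ioo (0:ℝ) 1) (n : ℕ) (hn : 1 ≤ n)
    (X : ℤ → Ω → Fin 2) (hXm : ∀ i, Measurable (X i))
    (hXi : iIndepFun X μ)
    (hXd : ∀ (i : ℤ) (a : Fin 2), (μ {ω | X i ω = a}).toReal = bernFn p a)
    (m : ℕ) (S : Finset ℤ) (hS : ↑S ⊆ Set.Icc (-(m:ℤ)) m)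
    (E : Set Ω)
    (hE : E = {ω | ∀ j ∈ Finset.Icc (-(m:ℤ)) (m:ℤ),
      (markerAt n (fun i => X i ω) j ↔ j ∈ S)})
    (T : Finset (ℤ × ℤ))
    (hT : ∀ t ∈ T, consecIn S t.1 t.2 ∧ (fillerOf n t).Nonempty)
    (v : ℤ → Fin 2) :
    μ (E ∩ {ω | ∀ t ∈ T, ∀ i ∈ fillerOf n t, X i ω = v i})
        * ENNReal.ofReal (∏ t ∈ T, fillerZ p n t)
      = μ E * ENNReal.ofReal (∏ t ∈ T, fillerWeight p n v t) ∧
    (∀ t ∈ T, (fillerOf n t).card = n → fillerZ p n t = 1) := by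
  have hwin : ∀ t : ℤ × ℤ, consecIn S t.1 t.2 →
      fillerOf n t ⊆ Finset.Icc (-(m:ℤ)) ((m:ℤ) + 2*n + 1) := by
    intro t ht i hi
    have h := mem_filler_window (n := n) hS ht i hi
    simp only [Finset.mem_Icc]
    omega
  constructor
  · -- main product formula, by induction on the set of fillers
    revert hT
    induction T using Finset.induction_on with
    | empty =>
      intro _
      simp
    | @insert t0 T' ht0 ih =>
      intro hT'
      have ht0c : consecIn S t0.1 t0.2 := (hT' t0 (Finset.mem_insert_self t0 T')).1
      have hTrest : ∀ t ∈ T', consecIn S t.1 t.2 ∧ (fillerOf n t).Nonempty :=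
        fun t ht => hT' t (Finset.mem_insert_of_mem ht)
      set F0 := fillerOf n t0 with hF0
      set W := Finset.Icc (-(m:ℤ)) ((m:ℤ) + 2*n + 1) with hW
      set J := W \ F0 with hJdef
      set Q : (ℤ → Fin 2) → Prop := fun x =>
        (∀ j ∈ Finset.Icc (-(m:ℤ)) (m:ℤ), (markerAt n x j ↔ j ∈ S)) ∧
        ∀ t ∈ T', ∀ i ∈ fillerOf n t, x i = v i with hQdef
      set A : (ℤ → Fin 2) → Prop := fun x => Q (fun i => if i ∈ F0 then 1 else x i)
        with hAdef
      set R : (ℤ → Fin 2) → Prop := fun x => noMarkerIn n x F0 with hRdef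
      -- Q is determined by the coordinates in the window W
      have hQw : ∀ x x', (∀ i ∈ W, x i = x' i) → Q x → Q x' := by
        intro x x' hag hx
        obtain ⟨h1, h2⟩ := hx
        constructor
        · intro j hj
          have hj' := hj
          simp only [Finset.mem_Icc] at hj'
          have hagj : ∀ i ∈ Finset.Icc j (j + 2 * (n:ℤ) + 1), x i = x' i := by
            intro i hi
            simp only [Finset.mem_Icc] at hi
            exact hag i (by simp only [hW, Finset.mem_Icc]; omega)
          rw [← markerAt_congr hagj]
          exact h1 j hj
        · intro t ht i hi
          rw [← hag i (hwin t (hTrest t ht).1 hi)]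
          exact h2 t ht i hi
      have hAdep : ∀ x x', (∀ i ∈ J, x i = x' i) → A x → A x' := by
        intro x x' hag hx
        refine hQw _ _ ?_ hx
        intro i hiW
        by_cases hiF : i ∈ F0
        · simp only [hiF, if_true]
        · simp only [hiF, if_false]
          exact hag i (by simp only [hJdef, Finset.mem_sdiff]; exact ⟨hiW, hiF⟩)
      have hRdep : ∀ x x', (∀ i ∈ F0, x i = x' i) → R x → R x' :=
        fun x x' hag hx => noMarkerIn_congr hag hx
      have hdis : ∀ t ∈ T', ∀ i ∈ fillerOf n t, i ∉ F0 := by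
        intro t ht i hi
        have hd := filler_disjoint (n := n) (hTrest t ht).1 ht0c
          (fun he => ht0 (he ▸ ht))
        exact Finset.disjoint_left.mp hd hi
      -- the event splits as (off-filler part) ∧ (no marker in the filler)
      have hQAR : ∀ x, Q x ↔ (A x ∧ R x) := by
        intro x
        constructor
        · intro hx
          obtain ⟨h1, h2⟩ := hx
          have hRx : R x := noMarkerIn_of_E hS ht0c h1
          refine ⟨⟨?_, ?_⟩, hRx⟩
          · refine key_marker hS ht0c (x := x) ?_ h1 ?_
            · intro i hi
              simp only [hF0, hi, if_false]
            · exact noMarkerIn_ones (fun i hi => by simp only [hF0, hi, if_true])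
          · intro t ht i hi
            have hiF : i ∉ F0 := hdis t ht i hi
            simp only [hiF, if_false]
            exact h2 t ht i hi
        · rintro ⟨hAx, hRx⟩
          obtain ⟨h1, h2⟩ := hAx
          constructor
          · refine key_marker hS ht0c
              (x := fun i => if i ∈ F0 then 1 else x i) ?_ h1 hRx
            intro i hi
            simp only [hF0, hi, if_false]
          · intro t ht i hi
            have hiF : i ∉ F0 := hdis t ht i hi
            have h := h2 t ht i hi
            simpa only [hiF, if_false] using h
      -- identify the two events
      have hsetT' : E ∩ {ω | ∀ t ∈ T', ∀ i ∈ fillerOf n t, X i ω = v i}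
          = {ω | A (fun i => X i ω) ∧ R (fun i => X i ω)} := by
        rw [hE]
        ext ω
        simp only [Set.mem_inter_iff, Set.mem_setOf_eq]
        exact hQAR (fun i => X i ω)
      have hsetIns : E ∩ {ω | ∀ t ∈ insert t0 T', ∀ i ∈ fillerOf n t, X i ω = v i}
          = {ω | (A (fun i => X i ω) ∧ R (fun i => X i ω)) ∧ ∀ i ∈ F0, X i ω = v i} := by
        rw [hE]
        ext ω
        simp only [Set.mem_inter_iff, Set.mem_setOf_eq, Finset.forall_mem_insert]
        constructor
        · rintro ⟨hEω, hv0, hvT⟩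
          exact ⟨(hQAR _).mp ⟨hEω, hvT⟩, hv0⟩
        · rintro ⟨hAR, hv0⟩
          have h := (hQAR _).mpr hAR
          exact ⟨h.1, hv0, h.2⟩
      have hdJF : Disjoint J F0 := Finset.sdiff_disjoint
      -- the single-filler conditional law
      have hARcyl : μ {ω | (A (fun i => X i ω) ∧ R (fun i => X i ω)) ∧ ∀ i ∈ F0, X i ω = v i}
          = μ {ω | A (fun i => X i ω)} *
            ENNReal.ofReal (if R v then ∏ i ∈ F0, bernFn p (v i) else 0) := by
        by_cases hy : R v
        · have hset2 : {ω | (A (fun i => X i ω) ∧ R (fun i => X i ω)) ∧ ∀ i ∈ F0, X i ω = v i}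
              = {ω | A (fun i => X i ω)} ∩ {ω | ∀ i ∈ F0, X i ω = v i} := by
            ext ω
            simp only [Set.mem_inter_iff, Set.mem_setOf_eq]
            constructor
            · rintro ⟨⟨hh1, -⟩, h3⟩
              exact ⟨hh1, h3⟩
            · rintro ⟨hh1, h3⟩
              exact ⟨⟨hh1, hRdep v _ (fun i hi => (h3 i hi).symm) hy⟩, h3⟩
          rw [hset2, meas_Q_cyl μ hp X hXm hXi hXd J F0 hdJF A hAdep v, if_pos hy]
        · have hset2 : {ω | (A (fun i => X i ω) ∧ R (fun i => X i ω)) ∧ ∀ i ∈ F0, X i ω = v i}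
              = (∅ : Set Ω) := by
            ext ω
            simp only [Set.mem_setOf_eq, Set.mem_empty_iff_false, iff_false, not_and]
            rintro ⟨-, hh2⟩ h3
            exact hy (hRdep _ v (fun i hi => h3 i hi) hh2)
          rw [hset2, measure_empty, if_neg hy, ENNReal.ofReal_zero, mul_zero]
      have hAR := meas_AR μ hp X hXm hXi hXd J F0 hdJF A R hAdep hRdep
      have hZ : fillerZ p n t0 = ∑ u : F0 → Fin 2,
          if R (extFn F0 u) then ∏ i ∈ F0, bernFn p (extFn F0 u i) else 0 :=
        fillerZ_eq p n t0
      have hWht : fillerWeight p n v t0 = if R v then ∏ i ∈ F0, bernFn p (v i) else 0 := by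
        unfold fillerWeight
        rw [prod_coe_fn]
      have hkey : μ (E ∩ {ω | ∀ t ∈ insert t0 T', ∀ i ∈ fillerOf n t, X i ω = v i})
            * ENNReal.ofReal (fillerZ p n t0)
          = μ (E ∩ {ω | ∀ t ∈ T', ∀ i ∈ fillerOf n t, X i ω = v i})
            * ENNReal.ofReal (fillerWeight p n v t0) := by
        rw [hsetIns, hsetT', hARcyl, hAR, hWht, hZ]
        ring
      have ih' := ih hTrest
      rw [Finset.prod_insert ht0, Finset.prod_insert ht0,
        ENNReal.ofReal_mul (fillerZ_nonneg hp n t0),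
        ENNReal.ofReal_mul (fillerWeight_nonneg hp n v t0)]
      calc μ (E ∩ {ω | ∀ t ∈ insert t0 T', ∀ i ∈ fillerOf n t, X i ω = v i}) *
            (ENNReal.ofReal (fillerZ p n t0) * ENNReal.ofReal (∏ t ∈ T', fillerZ p n t))
          = (μ (E ∩ {ω | ∀ t ∈ insert t0 T', ∀ i ∈ fillerOf n t, X i ω = v i}) *
              ENNReal.ofReal (fillerZ p n t0)) *
              ENNReal.ofReal (∏ t ∈ T', fillerZ p n t) := by ring
        _ = (μ (E ∩ {ω | ∀ t ∈ T', ∀ i ∈ fillerOf n t, X i ω = v i}) *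
              ENNReal.ofReal (fillerWeight p n v t0)) *
              ENNReal.ofReal (∏ t ∈ T', fillerZ p n t) := by rw [hkey]
        _ = (μ (E ∩ {ω | ∀ t ∈ T', ∀ i ∈ fillerOf n t, X i ω = v i}) *
              ENNReal.ofReal (∏ t ∈ T', fillerZ p n t)) *
              ENNReal.ofReal (fillerWeight p n v t0) := by ring
        _ = (μ E * ENNReal.ofReal (∏ t ∈ T', fillerWeight p n v t)) *
              ENNReal.ofReal (fillerWeight p n v t0) := by rw [ih']
        _ = μ E * (ENNReal.ofReal (fillerWeight p n v t0) *
              ENNReal.ofReal (∏ t ∈ T', fillerWeight p n v t)) := by ring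
  · -- fitted fillers have Z = 1
    intro t ht hcard
    have hmf : ∀ x : ℤ → Fin 2, noMarkerIn n x (fillerOf n t) := by
      intro x
      rintro ⟨i, hsub, -, -⟩
      have hle := Finset.card_le_card hsub
      rw [hcard, Int.card_Icc] at hle
      omega
    unfold fillerZ
    have hterm : ∀ u : fillerOf n t → Fin 2,
        (if noMarkerIn n (fun i => if h : i ∈ fillerOf n t then u ⟨i, h⟩ else 1)
            (fillerOf n t)
          then ∏ i : fillerOf n t, bernFn p (u i) else 0)
        = ∏ i : fillerOf n t, bernFn p (u i) :=
      fun u => if_pos (hmf _)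
    rw [Finset.sum_congr rfl (fun u _ => hterm u), ← Fintype.piFinset_univ,
      ← Finset.prod_univ_sum]
    have h2 : ∀ i : fillerOf n t, ∑ a ∈ (Finset.univ : Finset (Fin 2)), bernFn p a = 1 := by
      intro i
      rw [Fin.sum_univ_two]
      norm_num [bernFn]
    rw [Finset.prod_congr rfl (fun i _ => h2 i)]
    exact Finset.prod_const_one
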